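/- Let (X, μ) be a σ-finite measure space, let n ≥ 1, and let f_1, …, f_n : X → ℂ be measurable functions with ‖f_k‖_{1,∞} < ∞ for each k. Then ‖∑_{k=1}^n f_k‖_{1,∞} ≤ 4·∑_{k=1}^n ‖f_k‖_{1,∞}·(1 + log k). -/

import Mathlib

open MeasureTheory ENNReal

/-- The weak-`L¹` quasi-norm `‖h‖_{1,∞} = sup_{t>0} t · μ {x : |h x| > t}`. -/
noncomputable def weakL1 {X : Type*} [MeasurableSpace X] (μ : Measure X) (h : X → ℂ) : ℝ≥0∞ :=
  ⨆ t ∈ Set.Ioi (0 : ℝ), ENNReal.ofReal t * μ {x | t < ‖h x‖}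


lemma sum_inv_cube_aux : ∀ n : ℕ, 1 ≤ n →
    ∑ k ∈ Finset.Icc 1 n, ((k:ℝ)^3)⁻¹ ≤ 5/4 - 1/(2*n*(n+1)) := by
  intro n hn
  induction n with
  | zero => omega
  | succ m ih =>
    rcases Nat.eq_or_lt_of_le hn with h1 | h2
    · simp [← h1]; norm_num
    · have hm : 1 ≤ m := by omega
      have hmR : (1:ℝ) ≤ m := by exact_mod_cast hm
      rw [Finset.sum_Icc_succ_top (by omega : 1 ≤ m + 1)]
      have := ih hm
      push_cast
      push_cast at this
      have h1 : ((m:ℝ)+1)^3 ≥ m*(m+1)*(m+2) := by nlinarith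
      have h2 : (0:ℝ) < (m+1)^3 := by positivity
      have h3 : (((m:ℝ)+1)^3)⁻¹ ≤ 1/((m:ℝ)*(m+1)*(m+2)) := by
        rw [inv_eq_one_div]
        exact div_le_div_of_nonneg_left (by norm_num) (by positivity) h1
      have h4 : 1/((m:ℝ)*(m+1)*(m+2)) = 1/(2*m*(m+1)) - 1/(2*(m+1)*(m+2)) := by
        field_simp
        ring
      have h5 : 1/(2*((m:ℝ)+1)*((m:ℝ)+1+1)) = 1/(2*((m:ℝ)+1)*((m:ℝ)+2)) := by rw [show ((m:ℝ)+1+1) = (m:ℝ)+2 by ring]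
      linarith

lemma sum_inv_cube (n : ℕ) : ∑ k ∈ Finset.Icc 1 n, ((k:ℝ)^3)⁻¹ ≤ 5/4 := by
  rcases Nat.eq_zero_or_pos n with h | h
  · simp [h]; norm_num
  · have := sum_inv_cube_aux n h
    have hp : (0:ℝ) < 1/(2*n*(n+1)) := by positivity
    linarith

lemma exp_two_ge : (5:ℝ) ≤ Real.exp 2 := by
  have h := Real.exp_one_gt_d9
  have : Real.exp 2 = Real.exp 1 * Real.exp 1 := by
    rw [← Real.exp_add]; norm_num
  nlinarith [Real.exp_pos 1]


lemma key1d {γ L : ℝ} (hγ : 0 < γ) (hL : 0 < L) {k : ℕ} (hk : 1 ≤ k) :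
    ∫⁻ u in Set.Ioc (0:ℝ) (Real.exp 2 * k^3 * (γ/L)),
      ENNReal.ofReal (if u ≤ γ/L then L else γ/u)
      ≤ ENNReal.ofReal (γ * (3 + 3 * Real.log k)) := by
  have hkR : (1:ℝ) ≤ (k:ℝ) := by exact_mod_cast hk
  set a : ℝ := γ/L with ha_def
  set s : ℝ := Real.exp 2 * k^3 * a with hs_def
  have ha : 0 < a := div_pos hγ hL
  have hM : 1 ≤ Real.exp 2 * (k:ℝ)^3 := by
    have h1 : (1:ℝ) ≤ Real.exp 2 := by
      have := Real.one_le_exp (by norm_num : (0:ℝ) ≤ 2); linarith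
    have h2 : (1:ℝ) ≤ (k:ℝ)^3 := one_le_pow₀ hkR
    nlinarith
  have has : a ≤ s := by
    have := mul_le_mul_of_nonneg_right hM ha.le
    simpa [hs_def] using this
  have hs : 0 < s := lt_of_lt_of_le ha has
  rw [show Set.Ioc (0:ℝ) s = Set.Ioc 0 a ∪ Set.Ioc a s from
    (Set.Ioc_union_Ioc_eq_Ioc ha.le has).symm]
  rw [lintegral_union measurableSet_Ioc (Set.Ioc_disjoint_Ioc_of_le le_rfl)]
  have I1 : ∫⁻ u in Set.Ioc (0:ℝ) a, ENNReal.ofReal (if u ≤ a then L else γ/u)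
      = ENNReal.ofReal γ := by
    rw [setLIntegral_congr_fun measurableSet_Ioc
      ((fun u hu => by rw [if_pos hu.2] : ∀ u ∈ Set.Ioc (0:ℝ) a,
        ENNReal.ofReal (if u ≤ a then L else γ/u) = ENNReal.ofReal L))]
    rw [setLIntegral_const, Real.volume_Ioc]
    rw [← ENNReal.ofReal_mul hL.le]
    rw [ha_def]
    field_simp
    simp
  have I2 : ∫⁻ u in Set.Ioc a s, ENNReal.ofReal (if u ≤ a then L else γ/u)
      = ENNReal.ofReal (γ * (2 + 3 * Real.log k)) := by
    rw [setLIntegral_congr_fun measurableSet_Ioc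
      ((fun u hu => by rw [if_neg (not_le.2 hu.1)] : ∀ u ∈ Set.Ioc a s,
        ENNReal.ofReal (if u ≤ a then L else γ/u) = ENNReal.ofReal (γ/u)))]
    have hInt : IntegrableOn (fun u : ℝ => γ/u) (Set.Ioc a s) := by
      apply IntegrableOn.mono_set _ Set.Ioc_subset_Icc_self
      apply ContinuousOn.integrableOn_Icc
      apply continuousOn_const.div continuousOn_id
      intro u hu
      exact ne_of_gt (lt_of_lt_of_le ha hu.1)
    rw [← ofReal_integral_eq_lintegral_ofReal hInt
      ((ae_restrict_iff' measurableSet_Ioc).2 (ae_of_all _ (fun u hu =>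
        (div_pos hγ (lt_trans ha hu.1)).le)))]
    congr 1
    rw [← intervalIntegral.integral_of_le has]
    have : ∀ u : ℝ, γ/u = γ * u⁻¹ := fun u => div_eq_mul_inv γ u
    simp_rw [this]
    rw [intervalIntegral.integral_const_mul, integral_inv_of_pos ha hs]
    have hsa : s / a = Real.exp 2 * (k:ℝ)^3 := by
      rw [hs_def]; field_simp
    rw [hsa, Real.log_mul (Real.exp_ne_zero 2) (by positivity), Real.log_exp,
      Real.log_pow]
    push_cast
    ring
  rw [I1, I2, ← ENNReal.ofReal_add hγ.le (by positivity)]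
  apply ENNReal.ofReal_le_ofReal
  have hlog : 0 ≤ Real.log k := Real.log_nonneg hkR
  nlinarith

lemma mainE {X : Type*} [MeasurableSpace X] (μ : Measure X)
    (n : ℕ) (f : ℕ → X → ℂ)
    (hmeas : ∀ k ∈ Finset.Icc 1 n, Measurable (f k))
    (hfin : ∀ k ∈ Finset.Icc 1 n, weakL1 μ (f k) < ∞)
    (t : ℝ) (ht : 0 < t) (E : Set X)
    (hE : ∀ x ∈ E, t < ‖∑ k ∈ Finset.Icc 1 n, f k x‖)
    (hEfin : μ E ≠ ∞) (hEpos : μ E ≠ 0) (ε : ℝ) (hε : 0 < ε) :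
    ENNReal.ofReal t * μ E ≤
      ENNReal.ofReal (4 * ∑ k ∈ Finset.Icc 1 n,
        ((weakL1 μ (f k)).toReal + ε) * (1 + Real.log k)) := by
  set L : ℝ := (μ E).toReal with hL_def
  have hL : 0 < L := ENNReal.toReal_pos hEpos hEfin
  have hμE : μ E = ENNReal.ofReal L := (ENNReal.ofReal_toReal hEfin).symm
  set γ : ℕ → ℝ := fun k => (weakL1 μ (f k)).toReal + ε with hγ_def
  have hγ : ∀ k, 0 < γ k := fun k => by
    have : 0 ≤ (weakL1 μ (f k)).toReal := ENNReal.toReal_nonneg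
    simp only [hγ_def]; linarith
  set s : ℕ → ℝ := fun k => Real.exp 2 * k^3 * (γ k / L) with hs_def
  have hsm : ∀ k, 1 ≤ k → 0 < s k := fun k hk => by
    have : (0:ℝ) < k := by exact_mod_cast hk
    have := Real.exp_pos 2
    have := hγ k
    simp only [hs_def]
    positivity
  -- weak-L1 pointwise bound
  have wk : ∀ k ∈ Finset.Icc 1 n, ∀ u : ℝ, 0 < u →
      μ {x | u < ‖f k x‖} ≤ ENNReal.ofReal (γ k) / ENNReal.ofReal u := by
    intro k hk u hu
    rw [ENNReal.le_div_iff_mul_le (Or.inl (by simp [ENNReal.ofReal_eq_zero]; linarith))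
      (Or.inl ENNReal.ofReal_ne_top)]
    rw [mul_comm]
    calc ENNReal.ofReal u * μ {x | u < ‖f k x‖}
        ≤ weakL1 μ (f k) := by
          apply le_iSup₂ (f := fun (v:ℝ) (_ : v ∈ Set.Ioi (0:ℝ)) =>
            ENNReal.ofReal v * μ {x | v < ‖f k x‖}) u hu
      _ ≤ ENNReal.ofReal (γ k) := by
          rw [show weakL1 μ (f k) = ENNReal.ofReal ((weakL1 μ (f k)).toReal) from
            (ENNReal.ofReal_toReal (hfin k hk).ne).symm]
          exact ENNReal.ofReal_le_ofReal (by simp only [hγ_def]; linarith)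
  set B : Set X := ⋃ k ∈ Finset.Icc 1 n, {x | s k < ‖f k x‖} with hB_def
  have hBm : MeasurableSet B :=
    Finset.measurableSet_biUnion _ fun k hk =>
      measurableSet_lt measurable_const (hmeas k hk).norm
  -- tail bound
  have tail : μ (E ∩ B) ≤ ENNReal.ofReal (L/4) := by
    calc μ (E ∩ B) ≤ μ B := measure_mono Set.inter_subset_right
      _ ≤ ∑ k ∈ Finset.Icc 1 n, μ {x | s k < ‖f k x‖} := measure_biUnion_finset_le _ _
      _ ≤ ∑ k ∈ Finset.Icc 1 n, ENNReal.ofReal (L / (Real.exp 2 * k^3)) := by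
          apply Finset.sum_le_sum
          intro k hk
          have hk1 : 1 ≤ k := (Finset.mem_Icc.1 hk).1
          have hkR : (1:ℝ) ≤ (k:ℝ) := by exact_mod_cast hk1
          calc μ {x | s k < ‖f k x‖} ≤ ENNReal.ofReal (γ k) / ENNReal.ofReal (s k) :=
                wk k hk (s k) (hsm k hk1)
            _ = ENNReal.ofReal (γ k / s k) := (ENNReal.ofReal_div_of_pos (hsm k hk1)).symm
            _ = ENNReal.ofReal (L / (Real.exp 2 * k^3)) := by
                congr 1
                have hne : γ k ≠ 0 := (hγ k).ne'
                have hLne : L ≠ 0 := hL.ne'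
                have hepos := Real.exp_pos 2
                have h2 : Real.exp 2 * (k:ℝ)^3 ≠ 0 := by positivity
                have hkpos : (0:ℝ) < k := by exact_mod_cast hk1
                simp only [hs_def]
                field_simp
      _ = ENNReal.ofReal (∑ k ∈ Finset.Icc 1 n, L / (Real.exp 2 * k^3)) := by
          rw [ENNReal.ofReal_sum_of_nonneg]
          intro k hk
          have hk1 : 1 ≤ k := (Finset.mem_Icc.1 hk).1
          have : (0:ℝ) < k := by exact_mod_cast hk1
          have := Real.exp_pos 2
          positivity
      _ ≤ ENNReal.ofReal (L/4) := by
          apply ENNReal.ofReal_le_ofReal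
          have hsum := sum_inv_cube n
          have : ∑ k ∈ Finset.Icc 1 n, L / (Real.exp 2 * k^3)
              = (L / Real.exp 2) * ∑ k ∈ Finset.Icc 1 n, ((k:ℝ)^3)⁻¹ := by
            rw [Finset.mul_sum]
            apply Finset.sum_congr rfl
            intro k hk
            rw [div_mul_eq_mul_div, mul_comm]
            rw [div_mul_eq_div_div]
            ring_nf
          rw [this]
          have he := exp_two_ge
          have hepos := Real.exp_pos 2
          rw [div_mul_eq_mul_div, div_le_div_iff₀ hepos (by norm_num : (0:ℝ) < 4)]
          have hnn : 0 ≤ ∑ k ∈ Finset.Icc 1 n, ((k:ℝ)^3)⁻¹ := by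
            apply Finset.sum_nonneg; intro k _; positivity
          nlinarith
  -- truncated integral bound
  have trunc : ∀ k ∈ Finset.Icc 1 n,
      ∫⁻ x in E, ENNReal.ofReal (min ‖f k x‖ (s k)) ∂μ
        ≤ ENNReal.ofReal (γ k * (3 + 3 * Real.log k)) := by
    intro k hk
    have hk1 : 1 ≤ k := (Finset.mem_Icc.1 hk).1
    have hmin : Measurable fun x => min ‖f k x‖ (s k) :=
      (hmeas k hk).norm.min measurable_const
    rw [lintegral_eq_lintegral_meas_lt (μ.restrict E)
      (ae_of_all _ fun x => le_min (norm_nonneg _) (hsm k hk1).le) hmin.aemeasurable]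
    calc ∫⁻ u in Set.Ioi (0:ℝ), (μ.restrict E) {x | u < min ‖f k x‖ (s k)}
        ≤ ∫⁻ u in Set.Ioi (0:ℝ), (Set.Ioc 0 (s k)).indicator
            (fun u => ENNReal.ofReal (if u ≤ γ k / L then L else γ k / u)) u := by
          apply setLIntegral_mono' measurableSet_Ioi
          intro u hu
          rcases le_or_gt u (s k) with hus | hus
          · rw [Set.indicator_of_mem (Set.mem_Ioc.2 ⟨hu, hus⟩)]
            rcases le_or_gt u (γ k / L) with hua | hua
            · rw [if_pos hua]
              calc (μ.restrict E) {x | u < min ‖f k x‖ (s k)}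
                  ≤ (μ.restrict E) Set.univ := measure_mono (Set.subset_univ _)
                _ = μ E := by simp
                _ = ENNReal.ofReal L := hμE
            · rw [if_neg (not_le.2 hua)]
              calc (μ.restrict E) {x | u < min ‖f k x‖ (s k)}
                  ≤ μ {x | u < min ‖f k x‖ (s k)} := Measure.restrict_le_self _
                _ ≤ μ {x | u < ‖f k x‖} := by
                    apply measure_mono
                    intro x hx
                    simp only [Set.mem_setOf_eq] at hx ⊢
                    exact lt_of_lt_of_le hx (min_le_left _ _)
                _ ≤ ENNReal.ofReal (γ k) / ENNReal.ofReal u := wk k hk u hu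
                _ = ENNReal.ofReal (γ k / u) := (ENNReal.ofReal_div_of_pos hu).symm
          · rw [Set.indicator_of_notMem (by simp [Set.mem_Ioc]; intro _; linarith)]
            have : {x | u < min ‖f k x‖ (s k)} = ∅ := by
              ext x
              simp only [Set.mem_setOf_eq, Set.mem_empty_iff_false, iff_false, not_lt]
              exact le_trans (min_le_right _ _) hus.le
            rw [this, measure_empty]
      _ = ∫⁻ u in Set.Ioc (0:ℝ) (s k),
            ENNReal.ofReal (if u ≤ γ k / L then L else γ k / u) := by
          rw [lintegral_indicator measurableSet_Ioc, Measure.restrict_restrict measurableSet_Ioc,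
            Set.inter_eq_self_of_subset_left Set.Ioc_subset_Ioi_self]
      _ ≤ ENNReal.ofReal (γ k * (3 + 3 * Real.log k)) := by
          have := key1d (hγ k) hL hk1
          simpa [hs_def] using this
  -- main term
  have main : ENNReal.ofReal t * μ (E \ B)
      ≤ ENNReal.ofReal (∑ k ∈ Finset.Icc 1 n, γ k * (3 + 3 * Real.log k)) := by
    have hmeasg : Measurable fun x => ∑ k ∈ Finset.Icc 1 n,
        ENNReal.ofReal (min ‖f k x‖ (s k)) :=
      Finset.measurable_sum _ fun k hk =>
        ((hmeas k hk).norm.min measurable_const).ennreal_ofReal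
    calc ENNReal.ofReal t * μ (E \ B) = ∫⁻ _ in E \ B, ENNReal.ofReal t ∂μ :=
          (setLIntegral_const _ _).symm
      _ ≤ ∫⁻ x in E \ B, ∑ k ∈ Finset.Icc 1 n,
            ENNReal.ofReal (min ‖f k x‖ (s k)) ∂μ := by
          apply setLIntegral_mono hmeasg
          intro x hx
          have hxE : x ∈ E := hx.1
          have hxB : x ∉ B := hx.2
          have hbd : ∀ k ∈ Finset.Icc 1 n, ‖f k x‖ ≤ s k := by
            intro k hk
            by_contra hcon
            exact hxB (Set.mem_biUnion hk (by simpa using not_le.1 hcon))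
          have h1 : t ≤ ∑ k ∈ Finset.Icc 1 n, min ‖f k x‖ (s k) := by
            calc t ≤ ‖∑ k ∈ Finset.Icc 1 n, f k x‖ := (hE x hxE).le
              _ ≤ ∑ k ∈ Finset.Icc 1 n, ‖f k x‖ := norm_sum_le _ _
              _ = ∑ k ∈ Finset.Icc 1 n, min ‖f k x‖ (s k) := by
                  apply Finset.sum_congr rfl
                  intro k hk
                  exact (min_eq_left (hbd k hk)).symm
          calc ENNReal.ofReal t
              ≤ ENNReal.ofReal (∑ k ∈ Finset.Icc 1 n, min ‖f k x‖ (s k)) :=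
                ENNReal.ofReal_le_ofReal h1
            _ = ∑ k ∈ Finset.Icc 1 n, ENNReal.ofReal (min ‖f k x‖ (s k)) :=
                ENNReal.ofReal_sum_of_nonneg (fun k hk =>
                  le_min (norm_nonneg _) (hsm k (Finset.mem_Icc.1 hk).1).le)
      _ = ∑ k ∈ Finset.Icc 1 n, ∫⁻ x in E \ B,
            ENNReal.ofReal (min ‖f k x‖ (s k)) ∂μ :=
          lintegral_finset_sum _ fun k hk =>
            ((hmeas k hk).norm.min measurable_const).ennreal_ofReal
      _ ≤ ∑ k ∈ Finset.Icc 1 n, ∫⁻ x in E,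
            ENNReal.ofReal (min ‖f k x‖ (s k)) ∂μ :=
          Finset.sum_le_sum fun k _ => lintegral_mono_set Set.diff_subset
      _ ≤ ∑ k ∈ Finset.Icc 1 n, ENNReal.ofReal (γ k * (3 + 3 * Real.log k)) :=
          Finset.sum_le_sum trunc
      _ = ENNReal.ofReal (∑ k ∈ Finset.Icc 1 n, γ k * (3 + 3 * Real.log k)) := by
          rw [ENNReal.ofReal_sum_of_nonneg]
          intro k hk
          have h1 : (0:ℝ) ≤ Real.log k :=
            Real.log_nonneg (by exact_mod_cast (Finset.mem_Icc.1 hk).1)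
          have h2 := (hγ k).le
          positivity
  -- combine
  have hsum_nonneg : 0 ≤ ∑ k ∈ Finset.Icc 1 n, γ k * (1 + Real.log k) := by
    apply Finset.sum_nonneg
    intro k hk
    have h1 : (0:ℝ) ≤ Real.log k :=
      Real.log_nonneg (by exact_mod_cast (Finset.mem_Icc.1 hk).1)
    have h2 := (hγ k).le
    positivity
  have hsum3 : ∑ k ∈ Finset.Icc 1 n, γ k * (3 + 3 * Real.log k)
      = 3 * ∑ k ∈ Finset.Icc 1 n, γ k * (1 + Real.log k) := by
    rw [Finset.mul_sum]
    exact Finset.sum_congr rfl fun k _ => by ring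
  have key : ENNReal.ofReal (t * L) ≤ ENNReal.ofReal (t * (L/4)
      + 3 * ∑ k ∈ Finset.Icc 1 n, γ k * (1 + Real.log k)) := by
    calc ENNReal.ofReal (t * L) = ENNReal.ofReal t * μ E := by
          rw [hμE, ENNReal.ofReal_mul ht.le]
      _ = ENNReal.ofReal t * (μ (E ∩ B) + μ (E \ B)) := by
          rw [measure_inter_add_diff E hBm]
      _ = ENNReal.ofReal t * μ (E ∩ B) + ENNReal.ofReal t * μ (E \ B) := mul_add _ _ _
      _ ≤ ENNReal.ofReal t * ENNReal.ofReal (L/4)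
          + ENNReal.ofReal (∑ k ∈ Finset.Icc 1 n, γ k * (3 + 3 * Real.log k)) :=
          add_le_add (mul_le_mul_right tail _) main
      _ = ENNReal.ofReal (t * (L/4)
          + 3 * ∑ k ∈ Finset.Icc 1 n, γ k * (1 + Real.log k)) := by
          rw [← ENNReal.ofReal_mul ht.le, hsum3,
            ← ENNReal.ofReal_add (by positivity) (by linarith)]
  have keyR : t * L ≤ t * (L/4) + 3 * ∑ k ∈ Finset.Icc 1 n, γ k * (1 + Real.log k) := by
    rw [ENNReal.ofReal_le_ofReal_iff (add_nonneg (by positivity) (by linarith [hsum_nonneg]))] at key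
    exact key
  have final : t * L ≤ 4 * ∑ k ∈ Finset.Icc 1 n, γ k * (1 + Real.log k) := by
    have h : t * (L/4) = (t*L)/4 := by ring
    rw [h] at keyR
    linarith
  calc ENNReal.ofReal t * μ E = ENNReal.ofReal (t*L) := by
        rw [hμE, ENNReal.ofReal_mul ht.le]
    _ ≤ ENNReal.ofReal (4 * ∑ k ∈ Finset.Icc 1 n, γ k * (1 + Real.log k)) :=
        ENNReal.ofReal_le_ofReal final

theorem stmt1 {X : Type*} [MeasurableSpace X] (μ : Measure X) [SigmaFinite μ]
    (n : ℕ) (hn : 1 ≤ n) (f : ℕ → X → ℂ)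
    (hmeas : ∀ k ∈ Finset.Icc 1 n, Measurable (f k))
    (hfin : ∀ k ∈ Finset.Icc 1 n, weakL1 μ (f k) < ∞) :
    weakL1 μ (fun x => ∑ k ∈ Finset.Icc 1 n, f k x)
      ≤ 4 * ∑ k ∈ Finset.Icc 1 n, weakL1 μ (f k) * ENNReal.ofReal (1 + Real.log k) := by
  rw [weakL1]
  refine iSup₂_le fun t ht => ?_
  have ht' : 0 < t := ht
  set S := {x | t < ‖∑ k ∈ Finset.Icc 1 n, f k x‖} with hS_def
  have hmono : Monotone fun m => S ∩ spanningSets μ m :=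
    fun i j hij => Set.inter_subset_inter_right _ (monotone_spanningSets μ hij)
  have hμS : μ S = ⨆ m, μ (S ∩ spanningSets μ m) := by
    conv_lhs => rw [show S = ⋃ m, S ∩ spanningSets μ m by
      rw [← Set.inter_iUnion, iUnion_spanningSets, Set.inter_univ]]
    exact hmono.measure_iUnion
  rw [hμS, ENNReal.mul_iSup]
  refine iSup_le fun m => ?_
  by_cases hE0 : μ (S ∩ spanningSets μ m) = 0
  · simp [hE0]
  have hEfin : μ (S ∩ spanningSets μ m) ≠ ∞ :=
    ((measure_mono Set.inter_subset_right).trans_lt (measure_spanningSets_lt_top μ m)).ne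
  have hEsub : ∀ x ∈ S ∩ spanningSets μ m, t < ‖∑ k ∈ Finset.Icc 1 n, f k x‖ :=
    fun x hx => hx.1
  have hw_nonneg : ∀ k ∈ Finset.Icc 1 n, (0:ℝ) ≤ 1 + Real.log k := fun k hk => by
    have : (0:ℝ) ≤ Real.log k :=
      Real.log_nonneg (by exact_mod_cast (Finset.mem_Icc.1 hk).1)
    linarith
  have hreal : ∀ ε : ℝ, 0 < ε → t * (μ (S ∩ spanningSets μ m)).toReal
      ≤ 4 * ∑ k ∈ Finset.Icc 1 n, ((weakL1 μ (f k)).toReal + ε) * (1 + Real.log k) := by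
    intro ε hε
    have h := mainE μ n f hmeas hfin t ht' _ hEsub hEfin hE0 ε hε
    rw [show ENNReal.ofReal t * μ (S ∩ spanningSets μ m)
        = ENNReal.ofReal (t * (μ (S ∩ spanningSets μ m)).toReal) by
      rw [ENNReal.ofReal_mul ht'.le, ENNReal.ofReal_toReal hEfin]] at h
    rw [ENNReal.ofReal_le_ofReal_iff ?hnn] at h
    · exact h
    case hnn =>
      have : 0 ≤ ∑ k ∈ Finset.Icc 1 n, ((weakL1 μ (f k)).toReal + ε) * (1 + Real.log k) :=
        Finset.sum_nonneg fun k hk => mul_nonneg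
          (by have := ENNReal.toReal_nonneg (a := weakL1 μ (f k)); linarith)
          (hw_nonneg k hk)
      linarith
  have hexp : ∀ ε : ℝ, ∑ k ∈ Finset.Icc 1 n,
      ((weakL1 μ (f k)).toReal + ε) * (1 + Real.log k)
      = ∑ k ∈ Finset.Icc 1 n, (weakL1 μ (f k)).toReal * (1 + Real.log k)
        + ε * ∑ k ∈ Finset.Icc 1 n, (1 + Real.log k) := by
    intro ε
    rw [Finset.mul_sum, ← Finset.sum_add_distrib]
    exact Finset.sum_congr rfl fun k _ => by ring
  have hlim : t * (μ (S ∩ spanningSets μ m)).toReal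
      ≤ 4 * ∑ k ∈ Finset.Icc 1 n, (weakL1 μ (f k)).toReal * (1 + Real.log k) := by
    by_contra hcon
    push_neg at hcon
    have hWnn : (0:ℝ) ≤ ∑ k ∈ Finset.Icc 1 n, (1 + Real.log (k:ℝ)) :=
      Finset.sum_nonneg hw_nonneg
    obtain ⟨ε₀, hε₀pos, hε₀⟩ : ∃ ε₀ : ℝ, 0 < ε₀ ∧
        4 * (ε₀ * ∑ k ∈ Finset.Icc 1 n, (1 + Real.log (k:ℝ)))
          < t * (μ (S ∩ spanningSets μ m)).toReal
            - 4 * ∑ k ∈ Finset.Icc 1 n, (weakL1 μ (f k)).toReal * (1 + Real.log k) := by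
      set D : ℝ := t * (μ (S ∩ spanningSets μ m)).toReal
        - 4 * ∑ k ∈ Finset.Icc 1 n, (weakL1 μ (f k)).toReal * (1 + Real.log k) with hD
      have hDpos : 0 < D := by simp only [hD]; linarith
      refine ⟨D / (4 * (∑ k ∈ Finset.Icc 1 n, (1 + Real.log (k:ℝ))) + 1), by positivity, ?_⟩
      have hcancel : D / (4 * (∑ k ∈ Finset.Icc 1 n, (1 + Real.log (k:ℝ))) + 1)
          * (4 * (∑ k ∈ Finset.Icc 1 n, (1 + Real.log (k:ℝ))) + 1) = D :=
        div_mul_cancel₀ D (by positivity)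
      have hepos : 0 < D / (4 * (∑ k ∈ Finset.Icc 1 n, (1 + Real.log (k:ℝ))) + 1) := by
        positivity
      nlinarith [hcancel, hepos]
    have h := hreal ε₀ hε₀pos
    rw [hexp ε₀] at h
    linarith
  calc ENNReal.ofReal t * μ (S ∩ spanningSets μ m)
      = ENNReal.ofReal (t * (μ (S ∩ spanningSets μ m)).toReal) := by
        rw [ENNReal.ofReal_mul ht'.le, ENNReal.ofReal_toReal hEfin]
    _ ≤ ENNReal.ofReal (4 * ∑ k ∈ Finset.Icc 1 n,
          (weakL1 μ (f k)).toReal * (1 + Real.log k)) := ENNReal.ofReal_le_ofReal hlim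
    _ ≤ 4 * ∑ k ∈ Finset.Icc 1 n, weakL1 μ (f k) * ENNReal.ofReal (1 + Real.log k) := by
        rw [ENNReal.ofReal_mul (by norm_num : (0:ℝ) ≤ 4), ENNReal.ofReal_ofNat]
        apply mul_le_mul_right
        rw [ENNReal.ofReal_sum_of_nonneg (fun k hk =>
          mul_nonneg ENNReal.toReal_nonneg (hw_nonneg k hk))]
        apply Finset.sum_le_sum
        intro k hk
        rw [ENNReal.ofReal_mul ENNReal.toReal_nonneg,
          ENNReal.ofReal_toReal (hfin k hk).ne]
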